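/- With I = I1 ∩ I2 and I' = I1 + I2 for q-primary ideals I1, I2 in a regular local ring Q, the Hilbert functions satisfy h_{Q/I}(i) + h_{Q/I'}(i) = h_{Q/I1}(i) + h_{Q/I2}(i) for all i ≥ 0. -/

import Mathlib

open MvPolynomial

/-- The ideal generated by the variables (the graded maximal ideal `q`). -/
noncomputable def qIdeal (k : Type*) [Field k] (e : ℕ) : Ideal (MvPolynomial (Fin e) k) :=
  Ideal.span (Set.range X)

/-- The Hilbert function of `Q/J`: `h(i) = dim_k (q^i + J)/(q^{i+1} + J)`. -/
noncomputable def hilb (k : Type*) [Field k] (e : ℕ)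
    (J : Ideal (MvPolynomial (Fin e) k)) (i : ℕ) : ℕ :=
  Module.finrank k
    (((qIdeal k e ^ i ⊔ J).map (Ideal.Quotient.mk (qIdeal k e ^ (i + 1) ⊔ J))).restrictScalars k)

/-- An ideal is homogeneous if it is generated by homogeneous polynomials. -/
def IsHomogeneousIdeal (k : Type*) [Field k] (e : ℕ)
    (J : Ideal (MvPolynomial (Fin e) k)) : Prop :=
  ∃ S : Set (MvPolynomial (Fin e) k),
    (∀ p ∈ S, ∃ n, MvPolynomial.IsHomogeneous p n) ∧ J = Ideal.span S

namespace Stmt10Aux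

attribute [local instance] MvPolynomial.gradedAlgebra

variable {k : Type*} [Field k] {e : ℕ}

lemma degree_add (a b : Fin e →₀ ℕ) : (a + b).degree = a.degree + b.degree := by
  simp [Finsupp.degree_eq_weight_one, map_add]

/-- Polynomials with no monomials of degree `< n`. -/
def lowZero (k : Type*) [Field k] (e n : ℕ) : Ideal (MvPolynomial (Fin e) k) where
  carrier := {p | ∀ m : Fin e →₀ ℕ, m.degree < n → coeff m p = 0}
  zero_mem' := by intro m _; simp
  add_mem' := by intro a b ha hb m hm; simp [coeff_add, ha m hm, hb m hm]
  smul_mem' := by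
    intro r p hp m hm
    rw [smul_eq_mul, coeff_mul]
    apply Finset.sum_eq_zero
    rintro ⟨a, b⟩ hab
    rw [Finset.HasAntidiagonal.mem_antidiagonal] at hab
    have hb : b.degree ≤ m.degree := by
      rw [← hab, degree_add]; exact Nat.le_add_left _ _
    rw [hp b (lt_of_le_of_lt hb hm), mul_zero]

lemma qIdeal_le_lowZero_one : qIdeal k e ≤ lowZero k e 1 := by
  rw [qIdeal, Ideal.span_le]
  rintro _ ⟨j, rfl⟩ m hm
  have hm0 : m = 0 := by
    rwa [Nat.lt_one_iff, Finsupp.degree_eq_zero_iff] at hm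
  subst hm0
  exact coeff_zero_X j

lemma pow_le_lowZero (n : ℕ) : qIdeal k e ^ n ≤ lowZero k e n := by
  induction n with
  | zero => intro p _ m hm; omega
  | succ n ih =>
    rw [pow_succ, Ideal.mul_le]
    intro a ha b hb m hm
    have ha' := ih ha
    have hb' := qIdeal_le_lowZero_one hb
    rw [coeff_mul]
    apply Finset.sum_eq_zero
    rintro ⟨x, y⟩ hxy
    rw [Finset.HasAntidiagonal.mem_antidiagonal] at hxy
    have hdeg : x.degree + y.degree < n + 1 := by rw [← degree_add, hxy]; exact hm
    by_cases hx : x.degree < n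
    · rw [ha' x hx, zero_mul]
    · rw [hb' y (by omega), mul_zero]

lemma homogeneousComponent_eq_zero_of_mem_pow {p : MvPolynomial (Fin e) k} {n d : ℕ}
    (hp : p ∈ qIdeal k e ^ n) (hd : d < n) :
    homogeneousComponent d p = 0 := by
  apply MvPolynomial.ext
  intro m
  rw [coeff_homogeneousComponent, coeff_zero]
  split_ifs with h
  · exact pow_le_lowZero n hp m (by omega)
  · rfl

lemma prod_X_pow_mem (m : Fin e →₀ ℕ) :
    (∏ j ∈ m.support, (X j : MvPolynomial (Fin e) k) ^ m j) ∈
      qIdeal k e ^ (∑ j ∈ m.support, m j) := by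
  classical
  generalize m.support = s
  induction s using Finset.induction with
  | empty => simp [Ideal.one_eq_top]
  | @insert a s ha ih =>
    rw [Finset.prod_insert ha, Finset.sum_insert ha, pow_add]
    exact Ideal.mul_mem_mul (Ideal.pow_mem_pow (Ideal.subset_span (Set.mem_range_self a)) _) ih

lemma mem_pow_of_isHomogeneous {p : MvPolynomial (Fin e) k} {n : ℕ}
    (hp : p.IsHomogeneous n) : p ∈ qIdeal k e ^ n := by
  rw [p.as_sum]
  apply Ideal.sum_mem
  intro m hm
  have hdeg : m.degree = n := by
    have := hp (MvPolynomial.mem_support_iff.mp hm)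
    rwa [Finsupp.degree_eq_weight_one]
  rw [monomial_eq]
  apply Ideal.mul_mem_left
  have : (Finsupp.prod m fun j a => (X j : MvPolynomial (Fin e) k) ^ a) =
      ∏ j ∈ m.support, (X j : MvPolynomial (Fin e) k) ^ m j := rfl
  rw [this, ← hdeg]
  have : m.degree = ∑ j ∈ m.support, m j := rfl
  rw [this]
  exact prod_X_pow_mem m

lemma sub_homogeneousComponent_mem {g : MvPolynomial (Fin e) k} {i : ℕ}
    (hg : g ∈ qIdeal k e ^ i) :
    g - homogeneousComponent i g ∈ qIdeal k e ^ (i + 1) := by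
  classical
  obtain ⟨N, hN1, hN2⟩ : ∃ N, g.totalDegree ≤ N ∧ i ≤ N :=
    ⟨max g.totalDegree i, le_max_left _ _, le_max_right _ _⟩
  have hsum : ∑ d ∈ Finset.range (N + 1), homogeneousComponent d g = g := by
    calc ∑ d ∈ Finset.range (N + 1), homogeneousComponent d g
        = ∑ d ∈ Finset.range (g.totalDegree + 1), homogeneousComponent d g := by
          symm
          apply Finset.sum_subset (Finset.range_subset_range.mpr (by omega))
          intro d _ hd
          rw [Finset.mem_range, not_lt] at hd
          exact homogeneousComponent_eq_zero d g (Nat.lt_of_succ_le hd)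
      _ = g := sum_homogeneousComponent g
  have hi : i ∈ Finset.range (N + 1) := Finset.mem_range.mpr (by omega)
  have hrest : g - homogeneousComponent i g =
      ∑ d ∈ (Finset.range (N + 1)).erase i, homogeneousComponent d g := by
    rw [← Finset.add_sum_erase _ _ hi] at hsum
    exact sub_eq_of_eq_add' hsum.symm
  rw [hrest]
  apply Ideal.sum_mem
  intro d hd
  rw [Finset.mem_erase] at hd
  rcases lt_or_gt_of_ne hd.1 with h | h
  · rw [homogeneousComponent_eq_zero_of_mem_pow hg h]
    exact Ideal.zero_mem _
  · exact Ideal.pow_le_pow_right (by omega)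
      (mem_pow_of_isHomogeneous (homogeneousComponent_isHomogeneous d g))


/-- Component-closedness of an ideal. -/
def CC (J : Ideal (MvPolynomial (Fin e) k)) : Prop :=
  ∀ p ∈ J, ∀ n, homogeneousComponent n p ∈ J

lemma cc_of_isHomogeneousIdeal {J : Ideal (MvPolynomial (Fin e) k)}
    (h : IsHomogeneousIdeal k e J) : CC J := by
  obtain ⟨S, hS, rfl⟩ := h
  have hhom : Ideal.IsHomogeneous (homogeneousSubmodule (Fin e) k) (Ideal.span S) :=
    Ideal.homogeneous_span _ S (fun x hx => hS x hx)
  intro p hp n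
  have h0 := hhom n hp
  have hb : ((DirectSum.decompose (homogeneousSubmodule (Fin e) k) p n : MvPolynomial (Fin e) k))
      = homogeneousComponent n p := decomposition.decompose'_apply p n
  rwa [hb] at h0

lemma cc_inf {I1 I2 : Ideal (MvPolynomial (Fin e) k)} (h1 : CC I1) (h2 : CC I2) :
    CC (I1 ⊓ I2) := fun p hp n =>
  ⟨h1 p hp.1 n, h2 p hp.2 n⟩

lemma cc_sup {I1 I2 : Ideal (MvPolynomial (Fin e) k)} (h1 : CC I1) (h2 : CC I2) :
    CC (I1 + I2) := by
  intro p hp n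
  rw [Submodule.add_eq_sup] at hp ⊢
  obtain ⟨a, ha, b, hb, rfl⟩ := Submodule.mem_sup.mp hp
  rw [map_add]
  exact Submodule.add_mem _ (Submodule.mem_sup_left (h1 a ha n))
    (Submodule.mem_sup_right (h2 b hb n))

instance (i : ℕ) : FiniteDimensional k (homogeneousSubmodule (Fin e) k i) :=
  Submodule.finiteDimensional_of_le (S₂ := restrictTotalDegree (Fin e) k i)
    (fun _ hp => (mem_restrictTotalDegree _ _ _).mpr (IsHomogeneous.totalDegree_le hp))

set_option synthInstance.maxHeartbeats 1000000 in
set_option maxHeartbeats 1000000 in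
lemma hilb_add_finrank (J : Ideal (MvPolynomial (Fin e) k)) (hJ : CC J) (i : ℕ) :
    hilb k e J i +
      Module.finrank k ↥(J.restrictScalars k ⊓ homogeneousSubmodule (Fin e) k i) =
      Module.finrank k ↥(homogeneousSubmodule (Fin e) k i) := by
  classical
  set A : Ideal (MvPolynomial (Fin e) k) := qIdeal k e ^ (i + 1) ⊔ J with hA
  set Hi : Submodule k (MvPolynomial (Fin e) k) := homogeneousSubmodule (Fin e) k i with hHi
  let φ : Hi →ₗ[k] (MvPolynomial (Fin e) k ⧸ A) :=
    (Ideal.Quotient.mkₐ k A).toLinearMap ∘ₗ Hi.subtype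
  have hφ : ∀ x : Hi, φ x = Ideal.Quotient.mk A (x : MvPolynomial (Fin e) k) := fun x => rfl
  have hrange : LinearMap.range φ =
      ((qIdeal k e ^ i ⊔ J).map (Ideal.Quotient.mk A)).restrictScalars k := by
    apply le_antisymm
    · rintro _ ⟨⟨x, hx⟩, rfl⟩
      exact Ideal.mem_map_of_mem _ (Ideal.mem_sup_left (mem_pow_of_isHomogeneous hx))
    · rintro y hy
      obtain ⟨f, hf, rfl⟩ :=
        (Ideal.mem_map_iff_of_surjective _ Ideal.Quotient.mk_surjective).mp hy
      refine ⟨⟨homogeneousComponent i f, homogeneousComponent_mem i f⟩, ?_⟩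
      rw [hφ]
      rw [Ideal.Quotient.mk_eq_mk_iff_sub_mem]
      obtain ⟨g, hg, b, hb, rfl⟩ := Submodule.mem_sup.mp hf
      have : homogeneousComponent i (g + b) - (g + b) =
          -((g - homogeneousComponent i g) + (b - homogeneousComponent i b)) := by
        rw [map_add]; ring
      rw [this]
      apply Submodule.neg_mem
      apply Submodule.add_mem
      · exact Ideal.mem_sup_left (sub_homogeneousComponent_mem hg)
      · exact Ideal.mem_sup_right (Submodule.sub_mem _ hb (hJ b hb i))
  have hker : LinearMap.ker φ =
      (J.restrictScalars k ⊓ Hi).comap Hi.subtype := by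
    ext x
    obtain ⟨x, hx⟩ := x
    simp only [LinearMap.mem_ker, Submodule.mem_comap, Submodule.mem_inf, hφ,
      Submodule.subtype_apply, Submodule.restrictScalars_mem]
    constructor
    · intro h
      have hxA : x ∈ A := Ideal.Quotient.eq_zero_iff_mem.mp h
      obtain ⟨g, hg, b, hb, hgb⟩ := Submodule.mem_sup.mp hxA
      have hxi : homogeneousComponent i x = x := by
        rw [homogeneousComponent_of_mem hx, if_pos rfl]
      have hcomp : x = homogeneousComponent i g + homogeneousComponent i b := by
        rw [← map_add, hgb, hxi]
      have hg0 : homogeneousComponent i g = 0 :=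
        homogeneousComponent_eq_zero_of_mem_pow hg (Nat.lt_succ_self i)
      refine ⟨?_, hx⟩
      rw [hcomp, hg0, zero_add]
      exact hJ b hb i
    · rintro ⟨hxJ, -⟩
      exact Ideal.Quotient.eq_zero_iff_mem.mpr (Ideal.mem_sup_right hxJ)
  have h2 := LinearMap.finrank_range_add_finrank_ker φ
  rw [hrange, hker] at h2
  rw [← h2, hilb]
  congr 1
  exact (Submodule.comapSubtypeEquivOfLe
    (inf_le_right : J.restrictScalars k ⊓ Hi ≤ Hi)).finrank_eq.symm

lemma inf_homog_sup {I1 I2 : Ideal (MvPolynomial (Fin e) k)}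
    (h1 : CC I1) (h2 : CC I2) (i : ℕ) :
    (I1 + I2).restrictScalars k ⊓ homogeneousSubmodule (Fin e) k i =
      (I1.restrictScalars k ⊓ homogeneousSubmodule (Fin e) k i) ⊔
      (I2.restrictScalars k ⊓ homogeneousSubmodule (Fin e) k i) := by
  apply le_antisymm
  · intro x hx
    rw [Submodule.mem_inf] at hx
    obtain ⟨hx1, hx2⟩ := hx
    rw [Submodule.restrictScalars_mem, Submodule.add_eq_sup] at hx1
    obtain ⟨a, ha, b, hb, rfl⟩ := Submodule.mem_sup.mp hx1
    have hxi : homogeneousComponent i (a + b) = a + b := by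
      rw [homogeneousComponent_of_mem hx2, if_pos rfl]
    rw [← hxi, map_add]
    exact Submodule.add_mem _
      (Submodule.mem_sup_left ⟨h1 a ha i, homogeneousComponent_mem i a⟩)
      (Submodule.mem_sup_right ⟨h2 b hb i, homogeneousComponent_mem i b⟩)
  · apply sup_le
    · intro x hx
      rw [Submodule.mem_inf] at hx ⊢
      refine ⟨?_, hx.2⟩
      rw [Submodule.restrictScalars_mem, Submodule.add_eq_sup]
      exact Submodule.mem_sup_left hx.1
    · intro x hx
      rw [Submodule.mem_inf] at hx ⊢
      refine ⟨?_, hx.2⟩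
      rw [Submodule.restrictScalars_mem, Submodule.add_eq_sup]
      exact Submodule.mem_sup_right hx.1

end Stmt10Aux


open Stmt10Aux in
/-- With `I = I1 ∩ I2` and `I' = I1 + I2` for homogeneous
`q`-primary ideals `I1, I2` in the graded setting, the Hilbert functions
satisfy `h_{Q/I}(i) + h_{Q/I'}(i) = h_{Q/I1}(i) + h_{Q/I2}(i)` for all `i ≥ 0`
(Mayer–Vietoris). -/
theorem stmt10 (k : Type*) [Field k] (e : ℕ)
    (I1 I2 : Ideal (MvPolynomial (Fin e) k))
    (h1hom : IsHomogeneousIdeal k e I1) (h2hom : IsHomogeneousIdeal k e I2)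
    (h1p : I1.IsPrimary) (h1r : I1.radical = qIdeal k e)
    (h2p : I2.IsPrimary) (h2r : I2.radical = qIdeal k e) :
    ∀ i : ℕ, hilb k e (I1 ⊓ I2) i + hilb k e (I1 + I2) i =
      hilb k e I1 i + hilb k e I2 i := by
  intro i
  have c1 := cc_of_isHomogeneousIdeal h1hom
  have c2 := cc_of_isHomogeneousIdeal h2hom
  have E1 := hilb_add_finrank I1 c1 i
  have E2 := hilb_add_finrank I2 c2 i
  have Einf := hilb_add_finrank (I1 ⊓ I2) (cc_inf c1 c2) i
  have Esup := hilb_add_finrank (I1 + I2) (cc_sup c1 c2) i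
  have hWinf : (I1 ⊓ I2).restrictScalars k ⊓ homogeneousSubmodule (Fin e) k i =
      (I1.restrictScalars k ⊓ homogeneousSubmodule (Fin e) k i) ⊓
      (I2.restrictScalars k ⊓ homogeneousSubmodule (Fin e) k i) := by
    ext x
    simp only [Submodule.mem_inf, Submodule.restrictScalars_mem, Ideal.mem_inf]
    tauto
  have hWsup := inf_homog_sup c1 c2 i
  rw [hWinf] at Einf
  rw [hWsup] at Esup
  have fd1 : FiniteDimensional k
      ↥(I1.restrictScalars k ⊓ homogeneousSubmodule (Fin e) k i) :=
    Submodule.finiteDimensional_of_le inf_le_right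
  have fd2 : FiniteDimensional k
      ↥(I2.restrictScalars k ⊓ homogeneousSubmodule (Fin e) k i) :=
    Submodule.finiteDimensional_of_le inf_le_right
  have key := Submodule.finrank_sup_add_finrank_inf_eq
    (I1.restrictScalars k ⊓ homogeneousSubmodule (Fin e) k i)
    (I2.restrictScalars k ⊓ homogeneousSubmodule (Fin e) k i)
  omega
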